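/- Let K ⊂ ℝ^N be a convex body containing the origin in its interior and let G ⊂ ℝ^N be a bounded convex body. Then the function f(x) = ∫_G ‖y − x‖_K dy is differentiable at every point of ℝ^N and its gradient ∇f is Lipschitz continuous on ℝ^N. -/

import Mathlib

open MeasureTheory Set Pointwise Filter Topology
open scoped ENNReal

private lemma chord_pow (n : ℕ) {t : ℝ} (ht0 : 0 ≤ t) (ht1 : t ≤ 1) :
    (1 + t) ^ n ≤ 1 + (2 ^ n - 1) * t := by
  induction n with
  | zero => simp
  | succ n ih =>
    have h2 : (1 : ℝ) ≤ 2 ^ n := one_le_pow₀ (by norm_num)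
    rw [pow_succ]
    have h3 : (2:ℝ) ^ (n+1) = 2 ^ n * 2 := pow_succ 2 n
    nlinarith [mul_nonneg (by linarith : (0:ℝ) ≤ 2 ^ n - 1) (by nlinarith : (0:ℝ) ≤ t - t * t),
      mul_le_mul_of_nonneg_right ih (by linarith : (0:ℝ) ≤ 1 + t)]

private lemma vol_vadd (N : ℕ) (v : EuclideanSpace ℝ (Fin N)) (s : Set (EuclideanSpace ℝ (Fin N))) :
    volume (v +ᵥ s) = volume s := by
  have h : v +ᵥ s = (fun z : EuclideanSpace ℝ (Fin N) => z + (-v)) ⁻¹' s := by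
    ext z
    simp [Set.mem_vadd_set_iff_neg_vadd_mem, add_comm]
  rw [h, measure_preimage_add_right]

private lemma translate_diff_small (N : ℕ) {G : Set (EuclideanSpace ℝ (Fin N))}
    (hG_conv : Convex ℝ G) (hG_comp : IsCompact G) (hG_int : (interior G).Nonempty) :
    ∃ C : ℝ, 0 ≤ C ∧ ∀ w : EuclideanSpace ℝ (Fin N),
      volume ((w +ᵥ G) \ G) ≤ ENNReal.ofReal (C * ‖w‖) := by
  obtain ⟨z, hz⟩ := hG_int
  obtain ⟨r0, hr0, hball0⟩ := Metric.isOpen_iff.1 isOpen_interior z hz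
  set r : ℝ := r0 / 2 with hr_def
  have hr : 0 < r := by positivity
  have hball : Metric.closedBall z r ⊆ G :=
    (Metric.closedBall_subset_ball (by linarith)).trans (hball0.trans interior_subset)
  have hGfin : volume G ≠ ∞ := hG_comp.measure_lt_top.ne
  set VG : ℝ := (volume G).toReal with hVG_def
  have hVG0 : 0 ≤ VG := ENNReal.toReal_nonneg
  set A : Set (EuclideanSpace ℝ (Fin N)) := (-z) +ᵥ G with hA_def
  have hA_conv : Convex ℝ A := hG_conv.vadd _
  have hballA : Metric.closedBall 0 r ⊆ A := by
    intro y hy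
    rw [hA_def, Set.mem_vadd_set_iff_neg_vadd_mem]
    apply hball
    simp only [neg_neg, vadd_eq_add]
    rw [Metric.mem_closedBall, dist_eq_norm]
    simpa [add_comm] using Metric.mem_closedBall.1 hy
  have h0A : (0 : EuclideanSpace ℝ (Fin N)) ∈ A := hballA (Metric.mem_closedBall_self hr.le)
  refine ⟨2 ^ N * VG / r, by positivity, fun w => ?_⟩
  rcases eq_or_ne w 0 with rfl | hw0
  · simp
  rcases le_or_gt ‖w‖ r with hsmall | hlarge
  · -- small translation
    set t : ℝ := ‖w‖ / r with ht_def
    have ht0 : 0 < t := by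
      have : 0 < ‖w‖ := norm_pos_iff.2 hw0
      positivity
    have ht1 : t ≤ 1 := by
      rw [ht_def, div_le_one hr]; exact hsmall
    have h1t : (0:ℝ) < 1 + t := by linarith
    set S : Set (EuclideanSpace ℝ (Fin N)) := z +ᵥ ((1 + t) • A) with hS_def
    have hsub : A ⊆ (1 + t) • A := by
      intro a ha
      have hinv1 : (1 + t)⁻¹ ≤ 1 := by
        rw [inv_le_one_iff₀]; right; linarith
      have hmem : (1 + t)⁻¹ • a ∈ A := by
        have := hA_conv h0A ha (by linarith : (0:ℝ) ≤ 1 - (1 + t)⁻¹)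
          (by positivity : (0:ℝ) ≤ (1 + t)⁻¹) (by ring)
        simpa using this
      have hmem2 : (1 + t) • ((1 + t)⁻¹ • a) ∈ (1 + t) • A := Set.smul_mem_smul_set hmem
      rwa [smul_inv_smul₀ h1t.ne'] at hmem2
    have hGS : G ⊆ S := by
      intro y hy
      rw [hS_def, Set.mem_vadd_set_iff_neg_vadd_mem]
      exact hsub (by rw [hA_def]; exact Set.vadd_mem_vadd_set hy)
    have hwGS : (w +ᵥ G) ⊆ S := by
      intro y hy
      obtain ⟨u, hu, rfl⟩ := hy
      rw [hS_def, Set.mem_vadd_set_iff_neg_vadd_mem]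
      have hsplit : (1 + t) • A = A + t • A := by
        rw [hA_conv.add_smul (by norm_num : (0:ℝ) ≤ 1) ht0.le, one_smul]
      rw [hsplit]
      have h1 : -z + u ∈ A := by rw [hA_def]; exact Set.vadd_mem_vadd_set hu
      have h2 : w ∈ t • A := by
        have hwn : (0:ℝ) < ‖w‖ := norm_pos_iff.2 hw0
        have hmem : t⁻¹ • w ∈ A := by
          apply hballA
          rw [Metric.mem_closedBall, dist_zero_right, norm_smul, norm_inv,
            Real.norm_eq_abs, abs_of_pos ht0]
          have heq : t⁻¹ * ‖w‖ = r := by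
            rw [ht_def]; field_simp
          rw [heq]
        have hmem2 := Set.smul_mem_smul_set (a := t) hmem
        rwa [smul_inv_smul₀ ht0.ne'] at hmem2
      have : (-z + u) + w ∈ A + t • A := Set.add_mem_add h1 h2
      simpa [vadd_eq_add, add_comm, add_left_comm, add_assoc] using this
    have hvolS : volume S = ENNReal.ofReal ((1 + t) ^ N) * volume G := by
      rw [hS_def, vol_vadd, Measure.addHaar_smul, finrank_euclideanSpace_fin,
        abs_of_pos (pow_pos h1t N), hA_def, vol_vadd]
    have hdiff_sub : (w +ᵥ G) \ G ⊆ S \ G := Set.diff_subset_diff_left hwGS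
    have hmeasG : NullMeasurableSet G (volume) :=
      hG_comp.isClosed.measurableSet.nullMeasurableSet
    calc volume ((w +ᵥ G) \ G) ≤ volume (S \ G) := measure_mono hdiff_sub
      _ = volume S - volume G := measure_diff hGS hmeasG hGfin
      _ ≤ ENNReal.ofReal (2 ^ N * VG / r * ‖w‖) := by
          rw [tsub_le_iff_right, hvolS]
          have hchord : (1 + t) ^ N ≤ 1 + 2 ^ N * t := by
            have := chord_pow N ht0.le ht1
            nlinarith
          calc ENNReal.ofReal ((1 + t) ^ N) * volume G
              ≤ ENNReal.ofReal (1 + 2 ^ N * t) * volume G := by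
                gcongr
            _ = volume G + ENNReal.ofReal (2 ^ N * t) * volume G := by
                rw [ENNReal.ofReal_add (by norm_num : (0:ℝ) ≤ 1) (by positivity : (0:ℝ) ≤ 2 ^ N * t),
                  add_mul, ENNReal.ofReal_one, one_mul]
            _ = volume G + ENNReal.ofReal (2 ^ N * t * VG) := by
                rw [← ENNReal.ofReal_toReal hGfin, ← hVG_def, ← ENNReal.ofReal_mul (by positivity),
                  ENNReal.ofReal_toReal hGfin]
            _ = ENNReal.ofReal (2 ^ N * VG / r * ‖w‖) + volume G := by
                rw [add_comm]
                congr 1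
                rw [ht_def]
                field_simp
  · -- large translation
    have hle : volume ((w +ᵥ G) \ G) ≤ volume G := by
      calc volume ((w +ᵥ G) \ G) ≤ volume (w +ᵥ G) := measure_mono Set.diff_subset
        _ = volume G := vol_vadd N w G
    calc volume ((w +ᵥ G) \ G) ≤ volume G := hle
      _ = ENNReal.ofReal VG := (ENNReal.ofReal_toReal hGfin).symm
      _ ≤ ENNReal.ofReal (2 ^ N * VG / r * ‖w‖) := by
          apply ENNReal.ofReal_le_ofReal
          have h2N : (1:ℝ) ≤ 2 ^ N := one_le_pow₀ (by norm_num)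
          have hq : (1:ℝ) ≤ ‖w‖ / r := (one_le_div hr).2 hlarge.le
          have heq : 2 ^ N * VG / r * ‖w‖ = VG * (2 ^ N * (‖w‖ / r)) := by
            field_simp
          rw [heq]
          have h1q : (1:ℝ) ≤ 2 ^ N * (‖w‖ / r) := by nlinarith
          exact le_mul_of_one_le_right hVG0 h1q

private lemma gauge_lip {E : Type*} [NormedAddCommGroup E] [NormedSpace ℝ E]
    {K : Set E} (hK_conv : Convex ℝ K) (hK0 : (0 : E) ∈ interior K) :
    ∃ M : NNReal, LipschitzWith M (gauge K) := by
  obtain ⟨ε, hε, hball⟩ : ∃ ε > 0, Metric.ball (0 : E) ε ⊆ K := by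
    rcases Metric.mem_nhds_iff.1 (mem_interior_iff_mem_nhds.1 hK0) with ⟨ε, hε, h⟩
    exact ⟨ε, hε, h⟩
  have habs : Absorbent ℝ K := absorbent_nhds_zero (mem_interior_iff_mem_nhds.1 hK0)
  refine ⟨Real.toNNReal ε⁻¹, LipschitzWith.of_dist_le_mul fun a b => ?_⟩
  have key : ∀ u v : E, gauge K u - gauge K v ≤ ε⁻¹ * ‖u - v‖ := by
    intro u v
    have h1 : gauge K u ≤ gauge K v + gauge K (u - v) := by
      have := gauge_add_le hK_conv habs v (u - v)
      simpa using this
    have h2 : gauge K (u - v) ≤ ‖u - v‖ / ε := by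
      rw [← gauge_ball hε.le]
      exact gauge_mono (absorbent_ball_zero hε) hball _
    rw [div_eq_inv_mul] at h2
    linarith
  rw [Real.dist_eq, Real.coe_toNNReal _ (by positivity), dist_eq_norm]
  rcases abs_cases (gauge K a - gauge K b) with ⟨h, _⟩ | ⟨h, _⟩
  · rw [h]; exact key a b
  · rw [h]
    have := key b a
    rw [norm_sub_rev] at this
    linarith

/-- **Theorem 2.5 (regularity of the potential, key step).** Let `K ⊂ ℝ^N` be a convex body
containing the origin in its interior and `G ⊂ ℝ^N` a bounded convex body.  Then the
function `f(x) = ∫_G ‖y - x‖_K dy` is everywhere differentiable and its gradient is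
Lipschitz continuous on `ℝ^N`. -/
theorem gauge_potential_C11
    (N : ℕ) (K G : Set (EuclideanSpace ℝ (Fin N)))
    (hK_conv : Convex ℝ K) (hK_comp : IsCompact K)
    (hK0 : (0 : EuclideanSpace ℝ (Fin N)) ∈ interior K)
    (hG_conv : Convex ℝ G) (hG_comp : IsCompact G)
    (hG_int : (interior G).Nonempty) :
    Differentiable ℝ (fun x => ∫ y in G, gauge K (y - x)) ∧
      ∃ C : NNReal, LipschitzWith C (fderiv ℝ (fun x => ∫ y in G, gauge K (y - x))) := by
  obtain ⟨M, hLip⟩ := gauge_lip hK_conv hK0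
  set g : EuclideanSpace ℝ (Fin N) → ℝ := gauge K with hg_def
  have hgc : Continuous g := hLip.continuous
  have hGm : MeasurableSet G := hG_comp.isClosed.measurableSet
  have hGfin : volume G < ∞ := hG_comp.measure_lt_top
  set D : EuclideanSpace ℝ (Fin N) → (EuclideanSpace ℝ (Fin N) →L[ℝ] ℝ) :=
    fderiv ℝ g with hD_def
  have hDmeas : Measurable D := measurable_fderiv ℝ g
  have hDb : ∀ z, ‖D z‖ ≤ (M : ℝ) := fun z => norm_fderiv_le_of_lipschitz ℝ hLip
  have hDint : ∀ s : Set (EuclideanSpace ℝ (Fin N)), MeasurableSet s → volume s < ∞ →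
      IntegrableOn D s := by
    intro s hsm hsfin
    exact Integrable.mono' (integrableOn_const hsfin.ne (by simp) : IntegrableOn (fun _ => (M:ℝ)) s volume)
      hDmeas.stronglyMeasurable.aestronglyMeasurable (ae_of_all _ fun z => hDb z)
  have hDxint : ∀ x, IntegrableOn (fun y => D (y - x)) G := by
    intro x
    refine Integrable.mono' (integrableOn_const hGfin.ne (by simp) : IntegrableOn (fun _ => (M:ℝ)) G volume) ?_ (ae_of_all _ fun y => hDb _)
    exact ((hDmeas.comp (measurable_id.sub measurable_const)).stronglyMeasurable).aestronglyMeasurable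
  set L : EuclideanSpace ℝ (Fin N) → (EuclideanSpace ℝ (Fin N) →L[ℝ] ℝ) :=
    fun x => - ∫ y in G, D (y - x) with hL_def
  have hgint : ∀ x, IntegrableOn (fun y => g (y - x)) G := fun x =>
    ((hgc.comp (continuous_id.sub continuous_const)).continuousOn).integrableOn_compact hG_comp
  have hdiffae : ∀ x, ∀ᵐ y : EuclideanSpace ℝ (Fin N), DifferentiableAt ℝ g (y - x) := by
    intro x
    have h0 : ∀ᵐ z : EuclideanSpace ℝ (Fin N), DifferentiableAt ℝ g z :=
      hLip.ae_differentiableAt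
    have hmp : MeasurePreserving (fun y : EuclideanSpace ℝ (Fin N) => y - x) volume volume := by
      simpa [sub_eq_add_neg] using
        measurePreserving_add_right (volume : Measure (EuclideanSpace ℝ (Fin N))) (-x)
    exact hmp.quasiMeasurePreserving.ae h0
  have key : ∀ x, HasFDerivAt (fun x => ∫ y in G, g (y - x)) (L x) x := by
    intro x
    rw [hasFDerivAt_iff_tendsto]
    have happly : ∀ v, L x v = - ∫ y in G, D (y - x) v := by
      intro v
      rw [hL_def]
      simp only [ContinuousLinearMap.neg_apply, neg_inj]
      exact ContinuousLinearMap.integral_apply (hDxint x) v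
    set q : EuclideanSpace ℝ (Fin N) → EuclideanSpace ℝ (Fin N) → ℝ :=
      fun x' y => g (y - x') - g (y - x) + D (y - x) (x' - x) with hq_def
    have hrepr : ∀ x', (∫ y in G, g (y - x')) - (∫ y in G, g (y - x)) - L x (x' - x)
        = ∫ y in G, q x' y := by
      intro x'
      have h3 : IntegrableOn (fun y => D (y - x) (x' - x)) G volume :=
        (hDxint x).apply_continuousLinearMap _
      have hsub : IntegrableOn (fun y => g (y - x') - g (y - x)) G volume :=
        (hgint x').sub (hgint x)
      have e1 : (∫ y in G, g (y - x')) - (∫ y in G, g (y - x))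
          = ∫ y in G, (g (y - x') - g (y - x)) := (integral_sub (hgint x') (hgint x)).symm
      have e2 : (∫ y in G, (g (y - x') - g (y - x))) + (∫ y in G, D (y - x) (x' - x))
          = ∫ y in G, q x' y := (integral_add hsub h3).symm
      rw [happly, sub_neg_eq_add, e1, e2]
    have hqbound : ∀ x' y, ‖q x' y‖ ≤ 2 * (M : ℝ) * ‖x' - x‖ := by
      intro x' y
      have h1 : ‖g (y - x') - g (y - x)‖ ≤ (M : ℝ) * ‖x' - x‖ := by
        have h := hLip.dist_le_mul (y - x') (y - x)
        rw [dist_eq_norm, dist_eq_norm] at h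
        have harith : (y - x') - (y - x) = x - x' := by abel
        rw [harith, norm_sub_rev x x'] at h
        exact h
      have h2 : ‖D (y - x) (x' - x)‖ ≤ (M : ℝ) * ‖x' - x‖ :=
        ((D (y - x)).le_opNorm (x' - x)).trans
          (mul_le_mul_of_nonneg_right (hDb _) (norm_nonneg _))
      calc ‖q x' y‖ ≤ ‖g (y - x') - g (y - x)‖ + ‖D (y - x) (x' - x)‖ := norm_add_le _ _
        _ ≤ 2 * (M : ℝ) * ‖x' - x‖ := by linarith
    have hΦbound : ∀ x' y, ‖x' - x‖⁻¹ * ‖q x' y‖ ≤ 2 * (M : ℝ) := by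
      intro x' y
      have h1 : ‖x' - x‖⁻¹ * ‖q x' y‖ ≤ ‖x' - x‖⁻¹ * (2 * (M : ℝ) * ‖x' - x‖) :=
        mul_le_mul_of_nonneg_left (hqbound x' y) (by positivity)
      have h2 : ‖x' - x‖⁻¹ * ‖x' - x‖ ≤ 1 := by
        rcases eq_or_ne (x' - x) 0 with h | h
        · simp [h]
        · rw [inv_mul_cancel₀ (norm_ne_zero_iff.2 h)]
      calc ‖x' - x‖⁻¹ * ‖q x' y‖ ≤ ‖x' - x‖⁻¹ * (2 * (M : ℝ) * ‖x' - x‖) := h1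
        _ = 2 * (M : ℝ) * (‖x' - x‖⁻¹ * ‖x' - x‖) := by ring
        _ ≤ 2 * (M : ℝ) * 1 := by
            apply mul_le_mul_of_nonneg_left h2 (by positivity)
        _ = 2 * (M : ℝ) := mul_one _
    have hΦmeas : ∀ x', AEStronglyMeasurable
        (fun y => ‖x' - x‖⁻¹ * ‖q x' y‖) (volume.restrict G) := by
      intro x'
      have m1 : Measurable fun y : EuclideanSpace ℝ (Fin N) => g (y - x') :=
        hgc.measurable.comp (measurable_id.sub measurable_const)
      have m2 : Measurable fun y : EuclideanSpace ℝ (Fin N) => g (y - x) :=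
        hgc.measurable.comp (measurable_id.sub measurable_const)
      have m3 : Measurable fun y : EuclideanSpace ℝ (Fin N) => D (y - x) (x' - x) :=
        (measurable_fderiv_apply_const ℝ g (x' - x)).comp (measurable_id.sub measurable_const)
      exact (((((m1.sub m2).add m3).norm).const_mul _)).aestronglyMeasurable
    have hsq : ∀ x', ‖x' - x‖⁻¹ *
        ‖(∫ y in G, g (y - x')) - (∫ y in G, g (y - x)) - L x (x' - x)‖
        ≤ ∫ y in G, ‖x' - x‖⁻¹ * ‖q x' y‖ := by
      intro x'
      rw [hrepr x', integral_const_mul]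
      exact mul_le_mul_of_nonneg_left (norm_integral_le_integral_norm _) (by positivity)
    apply squeeze_zero (fun x' => by positivity) hsq
    rw [Filter.tendsto_iff_seq_tendsto]
    intro u hu
    have hlim0 : Filter.Tendsto (fun n => ∫ y in G, ‖u n - x‖⁻¹ * ‖q (u n) y‖) atTop
        (𝓝 (∫ (_ : EuclideanSpace ℝ (Fin N)) in G, (0:ℝ))) := by
      apply tendsto_integral_of_dominated_convergence (fun _ => 2 * (M : ℝ))
        (fun n => hΦmeas (u n)) (integrableOn_const hGfin.ne (by simp [ENNReal.mul_eq_top]))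
      · intro n
        exact ae_of_all _ fun y => by
          rw [Real.norm_eq_abs, abs_of_nonneg (by positivity)]
          exact hΦbound (u n) y
      · apply ae_restrict_of_ae
        filter_upwards [hdiffae x] with y hy
        have hfd := hy.hasFDerivAt
        rw [hasFDerivAt_iff_tendsto] at hfd
        have hcomp : Filter.Tendsto (fun n => y - u n) atTop (𝓝 (y - x)) :=
          tendsto_const_nhds.sub hu
        have hmain := hfd.comp hcomp
        have heq : (fun n => ‖(y - u n) - (y - x)‖⁻¹ *
            ‖g (y - u n) - g (y - x) - D (y - x) ((y - u n) - (y - x))‖)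
            = fun n => ‖u n - x‖⁻¹ * ‖q (u n) y‖ := by
          funext n
          have e1 : (y - u n) - (y - x) = -(u n - x) := by abel
          rw [e1, norm_neg, map_neg, sub_neg_eq_add]
        rw [Function.comp_def] at hmain
        rw [heq] at hmain
        exact hmain
    simpa [Function.comp_def] using hlim0
  have hDiff : Differentiable ℝ (fun x => ∫ y in G, g (y - x)) :=
    fun x => (key x).differentiableAt
  refine ⟨hDiff, ?_⟩
  obtain ⟨C₀, hC₀, hgeo⟩ := translate_diff_small N hG_conv hG_comp hG_int
  refine ⟨Real.toNNReal (2 * (M : ℝ) * C₀), ?_⟩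
  have hfd : ∀ x, fderiv ℝ (fun x => ∫ y in G, g (y - x)) x = L x := fun x => (key x).fderiv
  apply LipschitzWith.of_dist_le_mul
  intro x x'
  rw [dist_eq_norm, hfd, hfd, dist_eq_norm,
    Real.coe_toNNReal _ (mul_nonneg (by positivity) hC₀)]
  set S : EuclideanSpace ℝ (Fin N) → Set (EuclideanSpace ℝ (Fin N)) :=
    fun a => (fun z => z + a) ⁻¹' G with hS_def
  have hSmeas : ∀ a, MeasurableSet (S a) := fun a => hGm.preimage (measurable_add_const a)
  have hSvol : ∀ a, volume (S a) = volume G := fun a => measure_preimage_add_right volume a G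
  have hchange : ∀ a : EuclideanSpace ℝ (Fin N), (∫ y in G, D (y - a)) = ∫ z in S a, D z := by
    intro a
    have hemb : MeasurableEmbedding (fun z : EuclideanSpace ℝ (Fin N) => z + a) :=
      (MeasurableEquiv.addRight a).measurableEmbedding
    calc (∫ y in G, D (y - a))
        = ∫ y in G, D (y - a) ∂(Measure.map (· + a) volume) := by
          rw [map_add_right_eq_self]
      _ = ∫ z in (· + a) ⁻¹' G, D ((z + a) - a) := hemb.setIntegral_map _ _
      _ = ∫ z in S a, D z := by simp [hS_def]
  have hSint : ∀ a, IntegrableOn D (S a) :=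
    fun a => hDint _ (hSmeas a) (by rw [hSvol]; exact hGfin)
  have hLdiff : L x - L x' = (∫ z in S x', D z) - (∫ z in S x, D z) := by
    rw [hL_def]
    simp only
    rw [hchange x, hchange x', neg_sub_neg]
  have split : (∫ z in S x', D z) - (∫ z in S x, D z)
      = (∫ z in S x' \ S x, D z) - (∫ z in S x \ S x', D z) := by
    have h1 := integral_inter_add_diff (μ := volume) (hSmeas x) (hSint x')
    have h2 := integral_inter_add_diff (μ := volume) (hSmeas x') (hSint x)
    rw [Set.inter_comm] at h2
    rw [← h1, ← h2]
    abel
  have hdiffset : ∀ a b : EuclideanSpace ℝ (Fin N),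
      S a \ S b = (fun z => z + b) ⁻¹' (((b - a) +ᵥ G) \ G) := by
    intro a b
    ext zz
    have harith : -(b - a) + (zz + b) = zz + a := by abel
    simp only [hS_def, Set.mem_diff, Set.mem_preimage, Set.mem_vadd_set_iff_neg_vadd_mem,
      vadd_eq_add, harith]
  have hvol : ∀ a b : EuclideanSpace ℝ (Fin N),
      volume (S a \ S b) ≤ ENNReal.ofReal (C₀ * ‖a - b‖) := by
    intro a b
    rw [hdiffset a b, measure_preimage_add_right]
    have h := hgeo (b - a)
    rwa [norm_sub_rev] at h
  have hpiece : ∀ a b : EuclideanSpace ℝ (Fin N),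
      ‖∫ z in S a \ S b, D z‖ ≤ (M : ℝ) * (C₀ * ‖a - b‖) := by
    intro a b
    have hfin : volume (S a \ S b) < ∞ :=
      lt_of_le_of_lt (measure_mono Set.diff_subset) (by rw [hSvol]; exact hGfin)
    have h1 : ‖∫ z in S a \ S b, D z‖ ≤ (M : ℝ) * (volume (S a \ S b)).toReal :=
      norm_setIntegral_le_of_norm_le_const hfin (fun z _ => hDb z)
    have h2 : (volume (S a \ S b)).toReal ≤ C₀ * ‖a - b‖ :=
      ENNReal.toReal_le_of_le_ofReal (mul_nonneg hC₀ (norm_nonneg _)) (hvol a b)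
    exact h1.trans (mul_le_mul_of_nonneg_left h2 M.coe_nonneg)
  calc ‖L x - L x'‖ = ‖(∫ z in S x' \ S x, D z) - (∫ z in S x \ S x', D z)‖ := by
        rw [hLdiff, split]
    _ ≤ ‖∫ z in S x' \ S x, D z‖ + ‖∫ z in S x \ S x', D z‖ := norm_sub_le _ _
    _ ≤ (M : ℝ) * (C₀ * ‖x' - x‖) + (M : ℝ) * (C₀ * ‖x - x'‖) :=
        add_le_add (hpiece _ _) (hpiece _ _)
    _ = 2 * (M : ℝ) * C₀ * ‖x - x'‖ := by rw [norm_sub_rev x' x]; ring
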